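/- The Manin symbols [P,g], for P ∈ R_{k−2}[X,Y] and g ∈ SL₂(𝒪), generate the space of modular symbols M_k(Γ); equivalently, the natural map R_{k−2}[X,Y][Γ\SL₂(𝒪)] → M_k(Γ) sending P[Γg] to [P,g] is surjective. -/

import Mathlib

open scoped MatrixGroups LinearAlgebra.Projectivization Classical
open Matrix MvPolynomial NumberField

set_option maxHeartbeats 1000000
set_option synthInstance.maxHeartbeats 200000

noncomputable section

namespace Bianchi

/-- `K` is (isomorphic to) the imaginary quadratic field `ℚ(√-d)` for some
`d ∈ {1,2,3,7,11}`, i.e. a Euclidean imaginary quadratic field. -/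
def IsEuclideanImagQuad (K : Type) [Field K] [NumberField K] : Prop :=
  ∃ d : ℕ, d ∈ ({1, 2, 3, 7, 11} : Set ℕ) ∧
    ∃ α : K, α ^ 2 = -(d : K) ∧ Algebra.adjoin ℚ {α} = ⊤

variable (K : Type) [Field K] [NumberField K]

/-- 2×2 matrices with entries in `A`. -/
abbrev Mat2 (A : Type*) := Matrix (Fin 2) (Fin 2) A

/-- The map on matrices induced by the inclusion `𝓞 K → K`. -/
def ιm : Mat2 (𝓞 K) → Mat2 K := fun M => M.map (algebraMap (𝓞 K) K)

/-- The projective line `P¹(K)`, whose points are the cusps. -/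
abbrev P1 := ℙ K (Fin 2 → K)

/-- Action of a nonsingular `K`-matrix on `P¹(K)` (acting on column vectors);
junk value (the identity) for singular matrices. -/
def mAct (A : Mat2 K) : P1 K → P1 K :=
  if h : Function.Injective (Matrix.toLin' A) then
    Projectivization.map (Matrix.toLin' A) h else id

/-- The cusp `0 = 0/1 = [0 : 1]`. -/
def c0 : P1 K := Projectivization.mk K ![0, 1]
  (by intro h; have := congrFun h 1; simp at this)

/-- The cusp `∞ = 1/0 = [1 : 0]`. -/
def cInf : P1 K := Projectivization.mk K ![1, 0]
  (by intro h; have := congrFun h 0; simp at this)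

variable (R : Type) [CommRing R] [Algebra (𝓞 K) R] (k : ℕ)

/-- `R_{k-2}[X,Y]`, the space of homogeneous polynomials of degree `k - 2` in two
variables `X, Y` over `R`, presented by the coefficient vectors with respect to the
monomial basis `X^i Y^(k-2-i)`, `0 ≤ i ≤ k-2`. -/
abbrev Poly := Fin (k - 1) → R

/-- The exponent function of the `i`-th basis monomial `X^i Y^(k-2-i)` of `R_{k-2}[X,Y]`. -/
def expo (i : Fin (k - 1)) : Fin 2 →₀ ℕ :=
  Finsupp.single 0 (i : ℕ) + Finsupp.single 1 (k - 2 - (i : ℕ))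

/-- Interpret a coefficient vector as the homogeneous polynomial
`∑ i, P i • X^i Y^(k-2-i)`. -/
def toPoly : Poly R k →ₗ[R] MvPolynomial (Fin 2) R :=
  ∑ i : Fin (k - 1), (monomial (expo k i)).comp (LinearMap.proj i)

/-- Extract the coefficient vector of a homogeneous polynomial of degree `k-2`. -/
def ofPoly : MvPolynomial (Fin 2) R →ₗ[R] Poly R k :=
  LinearMap.pi (fun i => lcoeff R (expo k i))

/-- The pair of degree-one forms `(dX - bY, -cX + aY)` attached to `g = (a b; c d)`. -/
def substVec (g : Mat2 (𝓞 K)) : Fin 2 → MvPolynomial (Fin 2) R :=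
  ![C (algebraMap (𝓞 K) R (g 1 1)) * X 0 - C (algebraMap (𝓞 K) R (g 0 1)) * X 1,
    -(C (algebraMap (𝓞 K) R (g 1 0)) * X 0) + C (algebraMap (𝓞 K) R (g 0 0)) * X 1]

/-- The substitution `P(X,Y) ↦ P(dX - bY, -cX + aY)` for `g = (a b; c d)`. -/
def substMat (g : Mat2 (𝓞 K)) : MvPolynomial (Fin 2) R →ₐ[R] MvPolynomial (Fin 2) R :=
  aeval (substVec K R g)

/-- The right action `P ↦ P|_g = P(dX - bY, -cX + aY)` of a matrix `g` over `𝓞 K`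
on `R_{k-2}[X,Y]` (substitution preserves homogeneity, so this is computed by
passing to polynomials, substituting, and taking coefficients again). -/
def polyAct (g : Mat2 (𝓞 K)) : Poly R k →ₗ[R] Poly R k :=
  (ofPoly R k) ∘ₗ (substMat K R g).toLinearMap ∘ₗ (toPoly R k)

/-- Evaluation `P(x₀, x₁)` of `P ∈ R_{k-2}[X,Y]` at a pair of elements of `R`. -/
def pevalR (P : Poly R k) (x : Fin 2 → R) : R := MvPolynomial.eval x (toPoly R k P)

end Bianchi
namespace Bianchi

variable (K : Type) [Field K] [NumberField K]
variable (R : Type) [CommRing R] [Algebra (𝓞 K) R] (k : ℕ)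
variable (Γ : Subgroup (SL(2, 𝓞 K)))

/-- The relations defining boundary modular symbols: `x|_γ = x` for `γ ∈ Γ`. -/
def bsRel : Submodule R (P1 K →₀ Poly R k) :=
  Submodule.span R {x | ∃ (γ : SL(2, 𝓞 K)) (_ : γ ∈ Γ) (α : P1 K) (P : Poly R k),
    x = Finsupp.single (mAct K (ιm K γ.1) α) (polyAct K R k γ.1 P) - Finsupp.single α P}

/-- The boundary modular symbols `B_k(Γ)` of weight `k` and level `Γ`. -/
abbrev BS := (P1 K →₀ Poly R k) ⧸ bsRel K R k Γ

/-- The boundary modular symbol `P ⊗ {α}`. -/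
def bsym (α : P1 K) (P : Poly R k) : BS K R k Γ :=
  Submodule.Quotient.mk (Finsupp.single α P)

/-- The free module underlying modular symbols. -/
abbrev MSfree := (P1 K × P1 K) →₀ Poly R k

/-- The relations defining modular symbols: `{α,α} = 0`,
`{α,β} + {β,γ} + {γ,α} = 0`, and `x|_γ = x` for `γ ∈ Γ`. -/
def msRel : Submodule R (MSfree K R k) :=
  Submodule.span R
    ({x | ∃ (α : P1 K) (P : Poly R k), x = Finsupp.single (α, α) P} ∪
     {x | ∃ (α β γ : P1 K) (P : Poly R k),
        x = Finsupp.single (α, β) P + Finsupp.single (β, γ) P + Finsupp.single (γ, α) P} ∪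
     {x | ∃ (γ : SL(2, 𝓞 K)) (_ : γ ∈ Γ) (α β : P1 K) (P : Poly R k),
        x = Finsupp.single (mAct K (ιm K γ.1) α, mAct K (ιm K γ.1) β) (polyAct K R k γ.1 P)
          - Finsupp.single (α, β) P})

/-- The modular symbols `M_k(Γ)` of weight `k` and level `Γ`. -/
abbrev MS := MSfree K R k ⧸ msRel K R k Γ

/-- The modular symbol `P ⊗ {α, β}`. -/
def msym (α β : P1 K) (P : Poly R k) : MS K R k Γ :=
  Submodule.Quotient.mk (Finsupp.single (α, β) P)

/-- The boundary map on the free modules, `P ⊗ {α,β} ↦ P ⊗ {β} - P ⊗ {α}`. -/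
def bdFree : MSfree K R k →ₗ[R] (P1 K →₀ Poly R k) :=
  Finsupp.lsum ℕ (fun p : P1 K × P1 K =>
    (Finsupp.lsingle p.2 - Finsupp.lsingle p.1 : Poly R k →ₗ[R] (P1 K →₀ Poly R k)))

lemma bdFree_rel : msRel K R k Γ ≤ (bsRel K R k Γ).comap (bdFree K R k) := by
  rw [msRel, Submodule.span_le]
  rintro x ((⟨α, P, rfl⟩ | ⟨α, β, γ, P, rfl⟩) | ⟨γ, hγ, α, β, P, rfl⟩) <;>
    simp only [SetLike.mem_coe, Submodule.mem_comap, map_add, map_sub, bdFree,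
      Finsupp.lsum_single, LinearMap.sub_apply, Finsupp.lsingle_apply]
  · simpa using (bsRel K R k Γ).zero_mem
  · have h0 : (Finsupp.single β P - Finsupp.single α P)
        + (Finsupp.single γ P - Finsupp.single β P)
        + (Finsupp.single α P - Finsupp.single γ P) = (0 : P1 K →₀ Poly R k) := by abel
    rw [h0]
    exact (bsRel K R k Γ).zero_mem
  · have h1 : (Finsupp.single (mAct K (ιm K γ.1) β) (polyAct K R k γ.1 P)
        - Finsupp.single β P) ∈ bsRel K R k Γ :=
      Submodule.subset_span ⟨γ, hγ, β, P, rfl⟩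
    have h2 : (Finsupp.single (mAct K (ιm K γ.1) α) (polyAct K R k γ.1 P)
        - Finsupp.single α P) ∈ bsRel K R k Γ :=
      Submodule.subset_span ⟨γ, hγ, α, P, rfl⟩
    have h3 := Submodule.sub_mem _ h1 h2
    convert h3 using 1
    abel

/-- The boundary map `∂ : M_k(Γ) → B_k(Γ)`. -/
def bd : MS K R k Γ →ₗ[R] BS K R k Γ :=
  Submodule.mapQ _ _ (bdFree K R k) (bdFree_rel K R k Γ)

/-- The cuspidal modular symbols `𝒮_k(Γ) = ker ∂`. -/
def Scusp : Submodule R (MS K R k Γ) := LinearMap.ker (bd K R k Γ)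

/-- The Manin symbol `[P, g] = P|_g ⊗ {g·0, g·∞}`, for an arbitrary matrix `g` over `𝓞`. -/
def maninSymM (P : Poly R k) (A : Mat2 (𝓞 K)) : MS K R k Γ :=
  msym K R k Γ (mAct K (ιm K A) (c0 K)) (mAct K (ιm K A) (cInf K)) (polyAct K R k A P)

end Bianchi
section PartI

namespace Bianchi

variable (K : Type) [Field K] [NumberField K]
variable (R : Type) [CommRing R] [Algebra (𝓞 K) R] (k : ℕ)

lemma degree_fin2 (d : Fin 2 →₀ ℕ) : d.degree = d 0 + d 1 := by
  rw [Finsupp.degree_apply, Finset.sum_subset (Finset.subset_univ d.support)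
    (by intro i _ hi; simpa using Finsupp.notMem_support_iff.mp hi), Fin.sum_univ_two]

lemma expo_apply0 (i : Fin (k-1)) : expo k i 0 = i := by
  simp [expo, Finsupp.single_apply]

lemma expo_apply1 (i : Fin (k-1)) : expo k i 1 = k - 2 - i := by
  simp [expo, Finsupp.single_apply]

lemma expo_degree (hk : 2 ≤ k) (i : Fin (k-1)) : (expo k i).degree = k - 2 := by
  rw [degree_fin2, expo_apply0, expo_apply1]
  have := i.isLt
  omega

lemma expo_inj {i j : Fin (k-1)} (h : expo k i = expo k j) : i = j := by
  have h0 : expo k i 0 = expo k j 0 := by rw [h]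
  rw [expo_apply0, expo_apply0] at h0
  exact Fin.ext h0

lemma toPoly_apply (P : Poly R k) :
    toPoly R k P = ∑ i : Fin (k-1), monomial (expo k i) (P i) := by
  simp [toPoly]

lemma ofPoly_apply (Q : MvPolynomial (Fin 2) R) (i : Fin (k-1)) :
    ofPoly R k Q i = coeff (expo k i) Q := by
  simp [ofPoly]

lemma ofPoly_toPoly (P : Poly R k) : ofPoly R k (toPoly R k P) = P := by
  funext i
  rw [ofPoly_apply, toPoly_apply]
  rw [MvPolynomial.coeff_sum]
  rw [Finset.sum_eq_single i]
  · simp [coeff_monomial]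
  · intro j _ hj
    rw [coeff_monomial, if_neg (fun h => hj (expo_inj k h))]
  · simp

lemma toPoly_hom (hk : 2 ≤ k) (P : Poly R k) : (toPoly R k P).IsHomogeneous (k-2) := by
  rw [toPoly_apply]
  exact IsHomogeneous.sum _ _ _ (fun i _ => isHomogeneous_monomial _ (expo_degree k hk i))

lemma eq_expo_of_degree (hk : 2 ≤ k) {d : Fin 2 →₀ ℕ} (hd : d.degree = k - 2) :
    d = expo k ⟨d 0, by have := degree_fin2 d; omega⟩ := by
  ext a
  have h2 := degree_fin2 d
  rw [hd] at h2
  fin_cases a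
  · simpa using (expo_apply0 k ⟨d 0, by omega⟩).symm
  · have := expo_apply1 k ⟨d 0, by omega⟩
    simp only [Fin.mk_one] at this ⊢
    rw [this]
    omega

lemma toPoly_ofPoly (hk : 2 ≤ k) {Q : MvPolynomial (Fin 2) R}
    (hQ : Q.IsHomogeneous (k-2)) : toPoly R k (ofPoly R k Q) = Q := by
  ext e
  rw [toPoly_apply, MvPolynomial.coeff_sum]
  by_cases he : e.degree = k - 2
  · rw [Finset.sum_eq_single (⟨e 0, by have := degree_fin2 e; omega⟩ : Fin (k-1))]
    · rw [coeff_monomial, if_pos (eq_expo_of_degree k hk he).symm, ofPoly_apply,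
        ← eq_expo_of_degree k hk he]
    · intro j _ hj
      rw [coeff_monomial, if_neg]
      intro h
      rw [eq_expo_of_degree k hk he] at h
      exact hj (expo_inj k h)
    · simp
  · rw [hQ.coeff_eq_zero he]
    apply Finset.sum_eq_zero
    intro j _
    rw [coeff_monomial, if_neg]
    intro h
    exact he (h ▸ expo_degree k hk j)

lemma substVec_hom (g : Mat2 (𝓞 K)) (i : Fin 2) : (substVec K R g i).IsHomogeneous 1 := by
  fin_cases i
  · exact ((isHomogeneous_C_mul_X _ _).sub (isHomogeneous_C_mul_X _ _))
  · exact (((isHomogeneous_C_mul_X (R := R) _ _).neg).add (isHomogeneous_C_mul_X _ _))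

lemma substMat_hom {Q : MvPolynomial (Fin 2) R} {n : ℕ} (hQ : Q.IsHomogeneous n)
    (g : Mat2 (𝓞 K)) : (substMat K R g Q).IsHomogeneous n := by
  simpa [substMat] using hQ.aeval _ (substVec_hom K R g)

lemma substMat_comp (g h : Mat2 (𝓞 K)) (Q : MvPolynomial (Fin 2) R) :
    substMat K R g (substMat K R h Q) = substMat K R (g * h) Q := by
  have h1 : (substMat K R g).comp (substMat K R h) = substMat K R (g * h) := by
    apply MvPolynomial.algHom_ext
    intro i
    simp only [AlgHom.comp_apply, substMat, aeval_X]
    fin_cases i <;>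
      simp only [substVec, Fin.zero_eta, Fin.mk_one, Matrix.cons_val_zero, Matrix.cons_val_one,
        Matrix.head_cons, _root_.map_sub, _root_.map_add, _root_.map_neg, _root_.map_mul,
        aeval_C, aeval_X, algebraMap_eq, Matrix.mul_apply, Fin.sum_univ_two] <;> ring
  rw [← AlgHom.comp_apply, h1]

lemma substMat_one (Q : MvPolynomial (Fin 2) R) : substMat K R 1 Q = Q := by
  have h : substVec K R (1 : Mat2 (𝓞 K)) = X := by
    funext i
    fin_cases i <;> simp [substVec, Matrix.one_apply]
  rw [substMat, h, aeval_X_left, AlgHom.id_apply]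

lemma polyAct_mul (hk : 2 ≤ k) (g h : Mat2 (𝓞 K)) (P : Poly R k) :
    polyAct K R k g (polyAct K R k h P) = polyAct K R k (g * h) P := by
  simp only [polyAct, LinearMap.comp_apply, AlgHom.toLinearMap_apply]
  rw [toPoly_ofPoly R k hk (substMat_hom K R (toPoly_hom R k hk P) h), substMat_comp]

lemma polyAct_one (hk : 2 ≤ k) (P : Poly R k) : polyAct K R k 1 P = P := by
  simp only [polyAct, LinearMap.comp_apply, AlgHom.toLinearMap_apply]
  rw [substMat_one, ofPoly_toPoly]

lemma polyAct_surj (hk : 2 ≤ k) (g : SL(2, 𝓞 K)) :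
    Function.Surjective (polyAct K R k g.1) := by
  intro P
  refine ⟨polyAct K R k (g⁻¹).1 P, ?_⟩
  rw [polyAct_mul K R k hk, ← Matrix.SpecialLinearGroup.coe_mul, mul_inv_cancel,
    Matrix.SpecialLinearGroup.coe_one, polyAct_one K R k hk]

end Bianchi

end PartI
section PartII

namespace Bianchi

variable (K : Type) [Field K] [NumberField K]

lemma mk_congr {v w : Fin 2 → K} (hv : v ≠ 0) (h : v = w) :
    Projectivization.mk K v hv = Projectivization.mk K w (h ▸ hv) := by subst h; rfl

lemma toLin'_injective {A : Mat2 K} (hA : A.det ≠ 0) :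
    Function.Injective (Matrix.toLin' A) := by
  intro x y hxy
  have h := congrArg (fun w => A⁻¹ *ᵥ w) hxy
  simpa only [Matrix.toLin'_apply, Matrix.mulVec_mulVec,
    Matrix.nonsing_inv_mul A (isUnit_iff_ne_zero.mpr hA), Matrix.one_mulVec] using h

lemma mulVec_ne_zero {A : Mat2 K} (hA : A.det ≠ 0) {v : Fin 2 → K} (hv : v ≠ 0) :
    A *ᵥ v ≠ 0 := by
  intro h0
  apply hv
  apply toLin'_injective K hA
  simp only [Matrix.toLin'_apply, h0, Matrix.mulVec_zero]

lemma mAct_mk {A : Mat2 K} (hA : A.det ≠ 0) (v : Fin 2 → K) (hv : v ≠ 0) :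
    mAct K A (Projectivization.mk K v hv) =
      Projectivization.mk K (A *ᵥ v) (mulVec_ne_zero K hA hv) := by
  rw [mAct, dif_pos (toLin'_injective K hA)]
  rw [Projectivization.map_mk]
  exact mk_congr K _ (Matrix.toLin'_apply A v)

lemma det_ιm (g : SL(2, 𝓞 K)) : (ιm K g.1).det = 1 := by
  rw [ιm, show (g.1.map (algebraMap (𝓞 K) K)) = (algebraMap (𝓞 K) K).mapMatrix g.1 from rfl,
    ← RingHom.map_det, Matrix.SpecialLinearGroup.det_coe, _root_.map_one]

variable (R : Type) [CommRing R] [Algebra (𝓞 K) R] (k : ℕ)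
variable (Γ : Subgroup (SL(2, 𝓞 K)))

lemma msym_rel3 (α β γ : P1 K) (P : Poly R k) :
    msym K R k Γ α β P + msym K R k Γ β γ P + msym K R k Γ γ α P = 0 := by
  rw [msym, msym, msym, ← Submodule.Quotient.mk_add, ← Submodule.Quotient.mk_add,
    Submodule.Quotient.mk_eq_zero]
  exact Submodule.subset_span (Set.mem_union_left _ (Set.mem_union_right _ ⟨α, β, γ, P, rfl⟩))

lemma msym_self (α : P1 K) (P : Poly R k) : msym K R k Γ α α P = 0 := by
  rw [msym, Submodule.Quotient.mk_eq_zero]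
  exact Submodule.subset_span (Set.mem_union_left _ (Set.mem_union_left _ ⟨α, P, rfl⟩))

lemma msym_rev (α β : P1 K) (P : Poly R k) :
    msym K R k Γ β α P = - msym K R k Γ α β P := by
  have h := msym_rel3 K R k Γ α β α P
  rw [msym_self, add_zero] at h
  exact eq_neg_of_add_eq_zero_right h

lemma manin_mem (hk : 2 ≤ k) (g : SL(2, 𝓞 K)) (Q : Poly R k) :
    msym K R k Γ (mAct K (ιm K g.1) (c0 K)) (mAct K (ιm K g.1) (cInf K)) Q ∈
      Submodule.span R
        {x : MS K R k Γ | ∃ (P : Poly R k) (g : SL(2, 𝓞 K)), x = maninSymM K R k Γ P g.1} := by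
  obtain ⟨P, hP⟩ := polyAct_surj K R k hk g Q
  exact Submodule.subset_span ⟨P, g, by rw [maninSymM, hP]⟩

end Bianchi

end PartII
section PartIII

namespace Bianchi

variable {K : Type} [Field K] [NumberField K]

/-- The norm form on `K = ℚ(α)`, via the representation `x = a + bα`. -/
noncomputable def qn (K : Type) [Field K] (α : K) (d : ℕ) (x : K) : ℚ :=
  if h : ∃ a b : ℚ, x = (a : K) + (b : K) * α then
    h.choose ^ 2 + d * h.choose_spec.choose ^ 2 else 0

/-- The natural-number norm on `𝓞 K`. -/
noncomputable def natN (K : Type) [Field K] [NumberField K] (α : K) (d : ℕ) (z : 𝓞 K) : ℕ :=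
  (qn K α d (algebraMap (𝓞 K) K z)).num.toNat

section lemmas

variable {α : K} {d : ℕ}

lemma alpha_not_rat (hd1 : 1 ≤ d) (hα2 : α ^ 2 = -(d : K)) (c : ℚ) : α ≠ (c : K) := by
  intro h
  rw [h] at hα2
  have h2 : ((c ^ 2 + (d : ℚ) : ℚ) : K) = 0 := by push_cast; linear_combination hα2
  have h3 : (c ^ 2 + (d : ℚ) : ℚ) = 0 := by exact_mod_cast h2
  have hd' : (1 : ℚ) ≤ (d : ℚ) := by exact_mod_cast hd1
  nlinarith [sq_nonneg c, h3, hd']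

lemma rep_uniq (hd1 : 1 ≤ d) (hα2 : α ^ 2 = -(d : K)) {a b a' b' : ℚ}
    (h : (a : K) + (b : K) * α = (a' : K) + (b' : K) * α) : a = a' ∧ b = b' := by
  by_cases hb : b = b'
  · subst hb
    refine ⟨?_, rfl⟩
    have h2 : ((a : K)) = ((a' : K)) := add_right_cancel h
    exact_mod_cast h2
  · exfalso
    have hbb : ((b' - b : ℚ) : K) ≠ 0 := by
      rw [Ne, Rat.cast_eq_zero, sub_eq_zero]
      exact fun h' => hb h'.symm
    apply alpha_not_rat hd1 hα2 ((a - a') / (b' - b))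
    rw [Rat.cast_div, eq_div_iff hbb]
    push_cast
    linear_combination -h

lemma qn_eq (hd1 : 1 ≤ d) (hα2 : α ^ 2 = -(d : K)) {x : K} {a b : ℚ}
    (hx : x = (a : K) + (b : K) * α) : qn K α d x = a ^ 2 + d * b ^ 2 := by
  have h : ∃ a b : ℚ, x = (a : K) + (b : K) * α := ⟨a, b, hx⟩
  unfold qn
  rw [dif_pos h]
  obtain ⟨ha, hb⟩ := rep_uniq hd1 hα2 (h.choose_spec.choose_spec.symm.trans hx)
  rw [hb, ha]

lemma qn_nonneg (α : K) (d : ℕ) (x : K) : 0 ≤ qn K α d x := by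
  unfold qn
  split
  · positivity
  · exact le_rfl

lemma ex_rep (hα2 : α ^ 2 = -(d : K)) (htop : Algebra.adjoin ℚ {α} = ⊤) (x : K) :
    ∃ a b : ℚ, x = (a : K) + (b : K) * α := by
  have hx : x ∈ Algebra.adjoin ℚ {α} := htop ▸ Algebra.mem_top
  induction hx using Algebra.adjoin_induction with
  | mem y hy =>
    rw [Set.mem_singleton_iff] at hy
    exact ⟨0, 1, by rw [hy]; push_cast; ring⟩
  | algebraMap r => exact ⟨r, 0, by rw [eq_ratCast (algebraMap ℚ K) r]; push_cast; ring⟩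
  | add y z _ _ hy hz =>
    obtain ⟨a, b, rfl⟩ := hy
    obtain ⟨c, e, rfl⟩ := hz
    exact ⟨a + c, b + e, by push_cast; ring⟩
  | mul y z _ _ hy hz =>
    obtain ⟨a, b, rfl⟩ := hy
    obtain ⟨c, e, rfl⟩ := hz
    refine ⟨a * c - d * b * e, a * e + b * c, ?_⟩
    push_cast
    linear_combination (b : K) * (e : K) * hα2

lemma qn_mul (hd1 : 1 ≤ d) (hα2 : α ^ 2 = -(d : K)) (htop : Algebra.adjoin ℚ {α} = ⊤)
    (x y : K) : qn K α d (x * y) = qn K α d x * qn K α d y := by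
  obtain ⟨a, b, hx⟩ := ex_rep hα2 htop x
  obtain ⟨c, e, hy⟩ := ex_rep hα2 htop y
  have hxy : x * y = ((a * c - d * b * e : ℚ) : K) + ((a * e + b * c : ℚ) : K) * α := by
    rw [hx, hy]; push_cast; linear_combination (b : K) * (e : K) * hα2
  rw [qn_eq hd1 hα2 hx, qn_eq hd1 hα2 hy, qn_eq hd1 hα2 hxy]
  push_cast
  ring

lemma qn_eq_zero_iff (hd1 : 1 ≤ d) (hα2 : α ^ 2 = -(d : K))
    (htop : Algebra.adjoin ℚ {α} = ⊤) {x : K} : qn K α d x = 0 ↔ x = 0 := by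
  obtain ⟨a, b, hx⟩ := ex_rep hα2 htop x
  rw [qn_eq hd1 hα2 hx]
  constructor
  · intro h
    have hd' : (1 : ℚ) ≤ (d : ℚ) := by exact_mod_cast hd1
    have ha : a = 0 := by nlinarith [sq_nonneg a, sq_nonneg b]
    have hb : b = 0 := by nlinarith [sq_nonneg a, sq_nonneg b]
    rw [hx, ha, hb]; push_cast; ring
  · intro h
    rw [h] at hx
    have h0 : ((0 : ℚ) : K) + ((0 : ℚ) : K) * α = (a : K) + (b : K) * α := by
      push_cast
      linear_combination hx
    obtain ⟨ha, hb⟩ := rep_uniq hd1 hα2 h0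
    rw [← ha, ← hb]
    norm_num

lemma qn_int (hd1 : 1 ≤ d) (hα2 : α ^ 2 = -(d : K)) (htop : Algebra.adjoin ℚ {α} = ⊤)
    (z : 𝓞 K) : ∃ n : ℕ, (n : ℚ) = qn K α d (algebraMap (𝓞 K) K z) := by
  set x := algebraMap (𝓞 K) K z with hxdef
  obtain ⟨a, b, hx⟩ := ex_rep hα2 htop x
  have hqn : qn K α d x = a ^ 2 + d * b ^ 2 := qn_eq hd1 hα2 hx
  have hxint : IsIntegral ℤ x := z.isIntegral_coe
  suffices h : ∃ m : ℤ, (m : ℚ) = a ^ 2 + d * b ^ 2 by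
    obtain ⟨m, hm⟩ := h
    have hm0 : 0 ≤ m := by
      have : (0 : ℚ) ≤ (m : ℚ) := by rw [hm]; positivity
      exact_mod_cast this
    refine ⟨m.toNat, ?_⟩
    rw [hqn, ← hm]
    exact_mod_cast congrArg (fun t : ℤ => (t : ℚ)) (Int.toNat_of_nonneg hm0)
  by_cases hb : b = 0
  · -- x is rational
    have hxa : x = algebraMap ℚ K a := by
      rw [hx, hb, eq_ratCast (algebraMap ℚ K) a]; push_cast; ring
    have hint : IsIntegral ℤ a := by
      rw [← isIntegral_algebraMap_iff (algebraMap ℚ K).injective, ← hxa]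
      exact hxint
    obtain ⟨m, hm⟩ := IsIntegrallyClosed.isIntegral_iff.mp hint
    rw [eq_intCast (algebraMap ℤ ℚ) m] at hm
    exact ⟨m ^ 2, by rw [hb, ← hm]; push_cast; ring⟩
  · -- minimal polynomial is X² - 2aX + (a² + db²)
    set p : Polynomial ℚ := Polynomial.X ^ 2 - Polynomial.C (2 * a) * Polynomial.X +
      Polynomial.C (a ^ 2 + d * b ^ 2) with hpdef
    have hmono : p.Monic := by
      rw [hpdef]
      monicity!
    have hroot : Polynomial.aeval x p = 0 := by
      rw [hpdef, hx]
      simp only [map_add, map_sub, _root_.map_mul, map_pow, Polynomial.aeval_X,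
        Polynomial.aeval_C, eq_ratCast (algebraMap ℚ K)]
      push_cast
      linear_combination (b : K) ^ 2 * hα2
    have hQint : IsIntegral ℚ x := hxint.tower_top
    have hdvd : minpoly ℚ x ∣ p := minpoly.dvd ℚ x hroot
    have hpdeg : p.natDegree = 2 := by
      rw [hpdef]
      compute_degree!
    have hnotrange : x ∉ (algebraMap ℚ K).range := by
      rintro ⟨r, hr⟩
      apply alpha_not_rat hd1 hα2 ((r - a) / b)
      rw [Rat.cast_div, eq_div_iff (by exact_mod_cast hb : ((b : K) ≠ 0))]
      push_cast
      rw [← eq_ratCast (algebraMap ℚ K) r, hr, hx]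
      ring
    have hdeg2 : 2 ≤ (minpoly ℚ x).natDegree := (minpoly.two_le_natDegree_iff hQint).mpr hnotrange
    have hpeq : p = minpoly ℚ x := by
      obtain ⟨c, hc⟩ := hdvd
      have hmin0 : minpoly ℚ x ≠ 0 := minpoly.ne_zero hQint
      have hc0 : c ≠ 0 := by
        intro h0; rw [h0, mul_zero] at hc; exact hmono.ne_zero hc
      have hdeg : p.natDegree = (minpoly ℚ x).natDegree + c.natDegree := by
        rw [hc, Polynomial.natDegree_mul hmin0 hc0]
      have hcdeg : c.natDegree = 0 := by omega
      obtain ⟨r, rfl⟩ := Polynomial.natDegree_eq_zero.mp hcdeg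
      have hlc : p.leadingCoeff = (minpoly ℚ x).leadingCoeff * r := by
        rw [hc, Polynomial.leadingCoeff_mul, Polynomial.leadingCoeff_C]
      rw [hmono.leadingCoeff, (minpoly.monic hQint).leadingCoeff, one_mul] at hlc
      rw [hc, ← hlc, Polynomial.C_1, mul_one]
    have hfield : minpoly ℚ x = (minpoly ℤ x).map (algebraMap ℤ ℚ) :=
      minpoly.isIntegrallyClosed_eq_field_fractions' ℚ hxint
    refine ⟨(minpoly ℤ x).coeff 0, ?_⟩
    have hcoeff : p.coeff 0 = a ^ 2 + d * b ^ 2 := by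
      rw [hpdef]
      simp only [Polynomial.coeff_add, Polynomial.coeff_sub, Polynomial.coeff_X_pow,
        Polynomial.coeff_C_mul, Polynomial.coeff_X_zero, Polynomial.coeff_C]
      norm_num
    rw [← hcoeff, hpeq, hfield, Polynomial.coeff_map]
    simp [eq_intCast]

end lemmas

end Bianchi

end PartIII
section PartIIIb

namespace Bianchi

variable {K : Type} [Field K] [NumberField K] {α : K} {d : ℕ}

lemma hd_facts (hd : d ∈ ({1, 2, 3, 7, 11} : Set ℕ)) :
    1 ≤ d ∧ (d ≤ 2 ∨ ∃ c : ℕ, 4 * c = 1 + d ∧ c ≤ 3) := by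
  simp only [Set.mem_insert_iff, Set.mem_singleton_iff] at hd
  rcases hd with rfl | rfl | rfl | rfl | rfl
  · exact ⟨by norm_num, Or.inl (by norm_num)⟩
  · exact ⟨by norm_num, Or.inl (by norm_num)⟩
  · exact ⟨by norm_num, Or.inr ⟨1, by norm_num, by norm_num⟩⟩
  · exact ⟨by norm_num, Or.inr ⟨2, by norm_num, by norm_num⟩⟩
  · exact ⟨by norm_num, Or.inr ⟨3, by norm_num, by norm_num⟩⟩

lemma natN_cast (hd1 : 1 ≤ d) (hα2 : α ^ 2 = -(d : K)) (htop : Algebra.adjoin ℚ {α} = ⊤)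
    (z : 𝓞 K) : (natN K α d z : ℚ) = qn K α d (algebraMap (𝓞 K) K z) := by
  obtain ⟨n, hn⟩ := qn_int hd1 hα2 htop z
  rw [natN, ← hn]
  simp

lemma natN_eq_zero (hd1 : 1 ≤ d) (hα2 : α ^ 2 = -(d : K)) (htop : Algebra.adjoin ℚ {α} = ⊤)
    {q : 𝓞 K} (h : natN K α d q = 0) : q = 0 := by
  have hc := natN_cast hd1 hα2 htop q
  rw [h] at hc
  have h0 : qn K α d (algebraMap (𝓞 K) K q) = 0 := by exact_mod_cast hc.symm
  have := (qn_eq_zero_iff hd1 hα2 htop).mp h0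
  exact RingOfIntegers.coe_injective (by simpa using this)

lemma alpha_int (hα2 : α ^ 2 = -(d : K)) : IsIntegral ℤ α := by
  refine ⟨Polynomial.X ^ 2 + Polynomial.C (d : ℤ), Polynomial.monic_X_pow_add_C _ two_ne_zero, ?_⟩
  rw [← Polynomial.aeval_def]
  simp only [map_add, map_pow, Polynomial.aeval_X, Polynomial.aeval_C, eq_intCast, map_intCast]
  push_cast
  linear_combination hα2

lemma omega_int (hα2 : α ^ 2 = -(d : K)) {c : ℕ} (hc : 4 * c = 1 + d) :
    IsIntegral ℤ ((1 + α) / 2) := by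
  have hcK : 4 * (c : K) = 1 + (d : K) := by exact_mod_cast hc
  refine ⟨Polynomial.X ^ 2 - Polynomial.X + Polynomial.C (c : ℤ), ?_, ?_⟩
  · monicity!
  · rw [← Polynomial.aeval_def]
    simp only [map_add, map_sub, map_pow, Polynomial.aeval_X, Polynomial.aeval_C, eq_intCast,
      map_intCast]
    push_cast
    field_simp
    linear_combination hα2 + hcK

lemma exists_close (hd : d ∈ ({1, 2, 3, 7, 11} : Set ℕ)) (hα2 : α ^ 2 = -(d : K))
    (htop : Algebra.adjoin ℚ {α} = ⊤) (x : K) :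
    ∃ y : 𝓞 K, qn K α d (x - algebraMap (𝓞 K) K y) < 1 := by
  obtain ⟨hd1, hcase⟩ := hd_facts hd
  obtain ⟨a, b, hx⟩ := ex_rep hα2 htop x
  rcases hcase with hd2 | ⟨c, hc, hc3⟩
  · -- d = 1 or 2 : use the lattice ℤ + ℤα
    set m := round a
    set n := round b
    refine ⟨(m : 𝓞 K) + (n : 𝓞 K) * ⟨α, alpha_int hα2⟩, ?_⟩
    have hy : algebraMap (𝓞 K) K ((m : 𝓞 K) + (n : 𝓞 K) * ⟨α, alpha_int hα2⟩)
        = (m : K) + (n : K) * α := by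
      push_cast
      rfl
    have hrep : x - algebraMap (𝓞 K) K ((m : 𝓞 K) + (n : 𝓞 K) * ⟨α, alpha_int hα2⟩)
        = ((a - m : ℚ) : K) + ((b - n : ℚ) : K) * α := by
      rw [hy, hx]; push_cast; ring
    rw [qn_eq hd1 hα2 hrep]
    have h1 : |a - (m : ℚ)| ≤ 1 / 2 := abs_sub_round a
    have h2 : |b - (n : ℚ)| ≤ 1 / 2 := abs_sub_round b
    have hdq : (d : ℚ) ≤ 2 := by exact_mod_cast hd2
    nlinarith [sq_abs (a - (m : ℚ)), sq_abs (b - (n : ℚ)), abs_nonneg (a - (m : ℚ)),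
      abs_nonneg (b - (n : ℚ)), sq_nonneg (a - (m : ℚ)), sq_nonneg (b - (n : ℚ))]
  · -- d = 3, 7, 11 : use the lattice ℤ + ℤω, ω = (1+α)/2
    set n := round (2 * b)
    set m := round (a - (n : ℚ) / 2)
    refine ⟨(m : 𝓞 K) + (n : 𝓞 K) * ⟨(1 + α) / 2, omega_int hα2 hc⟩, ?_⟩
    have hy : algebraMap (𝓞 K) K ((m : 𝓞 K) + (n : 𝓞 K) * ⟨(1 + α) / 2, omega_int hα2 hc⟩)
        = (m : K) + (n : K) * ((1 + α) / 2) := by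
      push_cast
      rfl
    have hrep : x - algebraMap (𝓞 K) K ((m : 𝓞 K) + (n : 𝓞 K) * ⟨(1 + α) / 2, omega_int hα2 hc⟩)
        = ((a - m - (n : ℚ) / 2 : ℚ) : K) + ((b - (n : ℚ) / 2 : ℚ) : K) * α := by
      rw [hy, hx]; push_cast; ring
    rw [qn_eq hd1 hα2 hrep]
    have h1 : |2 * b - (n : ℚ)| ≤ 1 / 2 := abs_sub_round (2 * b)
    have h2 : |a - (n : ℚ) / 2 - (m : ℚ)| ≤ 1 / 2 := abs_sub_round (a - (n : ℚ) / 2)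
    have hdq : (d : ℚ) ≤ 11 := by
      have : d ≤ 11 := by omega
      exact_mod_cast this
    nlinarith [sq_abs (2 * b - (n : ℚ)), sq_abs (a - (n : ℚ) / 2 - (m : ℚ)),
      abs_nonneg (2 * b - (n : ℚ)), abs_nonneg (a - (n : ℚ) / 2 - (m : ℚ)),
      sq_nonneg (2 * b - (n : ℚ)), sq_nonneg (a - (n : ℚ) / 2 - (m : ℚ))]

lemma euclid (hd : d ∈ ({1, 2, 3, 7, 11} : Set ℕ)) (hα2 : α ^ 2 = -(d : K))
    (htop : Algebra.adjoin ℚ {α} = ⊤) (p q : 𝓞 K) (hq : q ≠ 0) :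
    ∃ t r : 𝓞 K, p = t * q + r ∧ natN K α d r < natN K α d q := by
  have hd1 : 1 ≤ d := (hd_facts hd).1
  have hqK : algebraMap (𝓞 K) K q ≠ 0 := fun h => hq (RingOfIntegers.coe_injective (by simpa using h))
  set x := algebraMap (𝓞 K) K p / algebraMap (𝓞 K) K q with hxdef
  obtain ⟨y, hy⟩ := exists_close hd hα2 htop x
  refine ⟨y, p - y * q, by ring, ?_⟩
  have hfac : algebraMap (𝓞 K) K (p - y * q)
      = algebraMap (𝓞 K) K q * (x - algebraMap (𝓞 K) K y) := by
    rw [map_sub, _root_.map_mul, hxdef]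
    field_simp
  have h1 : qn K α d (algebraMap (𝓞 K) K (p - y * q))
      = qn K α d (algebraMap (𝓞 K) K q) * qn K α d (x - algebraMap (𝓞 K) K y) := by
    rw [hfac, qn_mul hd1 hα2 htop]
  have hq0 : 0 < qn K α d (algebraMap (𝓞 K) K q) :=
    lt_of_le_of_ne (qn_nonneg α d _)
      (fun h => hqK ((qn_eq_zero_iff hd1 hα2 htop).mp h.symm))
  have h2 : qn K α d (algebraMap (𝓞 K) K (p - y * q)) < qn K α d (algebraMap (𝓞 K) K q) := by
    rw [h1]
    calc qn K α d (algebraMap (𝓞 K) K q) * qn K α d (x - algebraMap (𝓞 K) K y)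
        < qn K α d (algebraMap (𝓞 K) K q) * 1 := by
          exact mul_lt_mul_of_pos_left hy hq0
      _ = qn K α d (algebraMap (𝓞 K) K q) := mul_one _
  rw [← natN_cast hd1 hα2 htop, ← natN_cast hd1 hα2 htop] at h2
  exact_mod_cast h2

lemma bezout (hd : d ∈ ({1, 2, 3, 7, 11} : Set ℕ)) (hα2 : α ^ 2 = -(d : K))
    (htop : Algebra.adjoin ℚ {α} = ⊤) :
    ∀ (n : ℕ) (p q : 𝓞 K), natN K α d q ≤ n →
      ∃ c p' q' u v : 𝓞 K, p = c * p' ∧ q = c * q' ∧ p' * v - u * q' = 1 := by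
  have hd1 : 1 ≤ d := (hd_facts hd).1
  intro n
  induction n with
  | zero =>
    intro p q hq
    have hq0 : q = 0 := natN_eq_zero hd1 hα2 htop (Nat.le_zero.mp hq)
    exact ⟨p, 1, 0, 0, 1, by ring, by rw [hq0]; ring, by ring⟩
  | succ n ih =>
    intro p q hq
    by_cases hq0 : q = 0
    · exact ⟨p, 1, 0, 0, 1, by ring, by rw [hq0]; ring, by ring⟩
    · obtain ⟨t, r, hpr, hlt⟩ := euclid hd hα2 htop p q hq0
      obtain ⟨c, q₀, r₀, u₀, v₀, hq', hr', hbez⟩ := ih q r (by omega)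
      refine ⟨c, t * q₀ + r₀, q₀, -(t * u₀) - v₀, -u₀, ?_, hq', ?_⟩
      · rw [hpr, hq', hr']; ring
      · linear_combination hbez

end Bianchi

end PartIIIb
section PartIV

namespace Bianchi

variable (K : Type) [Field K] [NumberField K]
variable (R : Type) [CommRing R] [Algebra (𝓞 K) R] (k : ℕ)
variable (Γ : Subgroup (SL(2, 𝓞 K)))

lemma vec_ne_zero {a b : 𝓞 K} (h : ¬(a = 0 ∧ b = 0)) :
    ![algebraMap (𝓞 K) K a, algebraMap (𝓞 K) K b] ≠ 0 := by
  intro h0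
  apply h
  constructor
  · have h1 := congrFun h0 0
    simp only [Matrix.cons_val_zero, Pi.zero_apply] at h1
    exact RingOfIntegers.coe_injective (by simpa using h1)
  · have h1 := congrFun h0 1
    simp only [Matrix.cons_val_one, Matrix.head_cons, Pi.zero_apply] at h1
    exact RingOfIntegers.coe_injective (by simpa using h1)

lemma mk_eq_cInf (p q : 𝓞 K) (hq : q = 0) (hp : p ≠ 0)
    (hpq : ![algebraMap (𝓞 K) K p, algebraMap (𝓞 K) K q] ≠ 0) :
    Projectivization.mk K ![algebraMap (𝓞 K) K p, algebraMap (𝓞 K) K q] hpq = cInf K := by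
  rw [cInf, Projectivization.mk_eq_mk_iff']
  refine ⟨algebraMap (𝓞 K) K p, ?_⟩
  funext i
  fin_cases i <;> simp [hq]

lemma mAct_c0_ex (a b c e : 𝓞 K) (hdet : (ιm K !![a, b; c, e]).det ≠ 0)
    (h1 : ![algebraMap (𝓞 K) K b, algebraMap (𝓞 K) K e] ≠ 0) :
    mAct K (ιm K !![a, b; c, e]) (c0 K) =
      Projectivization.mk K ![algebraMap (𝓞 K) K b, algebraMap (𝓞 K) K e] h1 := by
  rw [c0, mAct_mk K hdet]
  have hvec : (ιm K !![a, b; c, e]) *ᵥ ![0, 1] =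
      ![algebraMap (𝓞 K) K b, algebraMap (𝓞 K) K e] := by
    funext i
    fin_cases i <;>
      simp [ιm, Matrix.mulVec, dotProduct, Fin.sum_univ_two, Matrix.map_apply]
  exact mk_congr K _ hvec

lemma mAct_cInf_ex (a b c e : 𝓞 K) (hdet : (ιm K !![a, b; c, e]).det ≠ 0)
    (h1 : ![algebraMap (𝓞 K) K a, algebraMap (𝓞 K) K c] ≠ 0) :
    mAct K (ιm K !![a, b; c, e]) (cInf K) =
      Projectivization.mk K ![algebraMap (𝓞 K) K a, algebraMap (𝓞 K) K c] h1 := by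
  rw [cInf, mAct_mk K hdet]
  have hvec : (ιm K !![a, b; c, e]) *ᵥ ![1, 0] =
      ![algebraMap (𝓞 K) K a, algebraMap (𝓞 K) K c] := by
    funext i
    fin_cases i <;>
      simp [ιm, Matrix.mulVec, dotProduct, Fin.sum_univ_two, Matrix.map_apply]
  exact mk_congr K _ hvec

lemma key (hk : 2 ≤ k) {α : K} {d : ℕ} (hd : d ∈ ({1, 2, 3, 7, 11} : Set ℕ))
    (hα2 : α ^ 2 = -(d : K)) (htop : Algebra.adjoin ℚ {α} = ⊤) :
    ∀ (n : ℕ) (p q u v : 𝓞 K), p * v - u * q = 1 → natN K α d q ≤ n →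
      ∀ (hpq : ![algebraMap (𝓞 K) K p, algebraMap (𝓞 K) K q] ≠ 0) (P : Poly R k),
        msym K R k Γ (Projectivization.mk K ![algebraMap (𝓞 K) K p, algebraMap (𝓞 K) K q] hpq)
          (cInf K) P ∈ Submodule.span R
            {x : MS K R k Γ | ∃ (P : Poly R k) (g : SL(2, 𝓞 K)), x = maninSymM K R k Γ P g.1} := by
  have hd1 : 1 ≤ d := (hd_facts hd).1
  intro n
  induction n with
  | zero =>
    intro p q u v hbez hn hpq P
    have hq0 : q = 0 := natN_eq_zero hd1 hα2 htop (Nat.le_zero.mp hn)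
    have hp0 : p ≠ 0 := by
      intro h
      rw [h, hq0] at hbez
      simp at hbez
    rw [mk_eq_cInf K p q hq0 hp0, msym_self]
    exact Submodule.zero_mem _
  | succ n ih =>
    intro p q u v hbez hn hpq P
    by_cases hq0 : q = 0
    · have hp0 : p ≠ 0 := by
        intro h
        rw [h, hq0] at hbez
        simp at hbez
      rw [mk_eq_cInf K p q hq0 hp0, msym_self]
      exact Submodule.zero_mem _
    · obtain ⟨t, v₁, hvd, hlt⟩ := euclid hd hα2 htop v q hq0
      set u₁ := u - t * p with hu₁
      have hbez1 : p * v₁ - u₁ * q = 1 := by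
        rw [hu₁]
        linear_combination hbez - p * hvd
      have hnand : ¬(u₁ = 0 ∧ v₁ = 0) := by
        rintro ⟨h1, h2⟩
        rw [h1, h2] at hbez1
        simp at hbez1
      have h1 : ![algebraMap (𝓞 K) K u₁, algebraMap (𝓞 K) K v₁] ≠ 0 := vec_ne_zero K hnand
      set g : SL(2, 𝓞 K) := ⟨!![p, u₁; q, v₁], by
        rw [Matrix.det_fin_two_of]; linear_combination hbez1⟩ with hg
      have hMdet : (ιm K g.1).det ≠ 0 := by rw [det_ιm]; exact one_ne_zero
      have hManin := manin_mem K R k Γ hk g P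
      rw [show g.1 = !![p, u₁; q, v₁] from rfl] at hManin
      rw [mAct_c0_ex K p u₁ q v₁ (by rw [show !![p, u₁; q, v₁] = g.1 from rfl]; exact hMdet) h1,
        mAct_cInf_ex K p u₁ q v₁ (by rw [show !![p, u₁; q, v₁] = g.1 from rfl]; exact hMdet) hpq]
        at hManin
      have hIH := ih u₁ v₁ (-p) (-q) (by linear_combination hbez1) (by omega) h1 P
      have hrel := msym_rel3 K R k Γ
        (Projectivization.mk K ![algebraMap (𝓞 K) K u₁, algebraMap (𝓞 K) K v₁] h1)
        (Projectivization.mk K ![algebraMap (𝓞 K) K p, algebraMap (𝓞 K) K q] hpq)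
        (cInf K) P
      rw [msym_rev K R k Γ
        (Projectivization.mk K ![algebraMap (𝓞 K) K u₁, algebraMap (𝓞 K) K v₁] h1)
        (cInf K) P, add_neg_eq_zero] at hrel
      have heq : msym K R k Γ
          (Projectivization.mk K ![algebraMap (𝓞 K) K p, algebraMap (𝓞 K) K q] hpq)
          (cInf K) P
          = msym K R k Γ
            (Projectivization.mk K ![algebraMap (𝓞 K) K u₁, algebraMap (𝓞 K) K v₁] h1)
            (cInf K) P
          - msym K R k Γ
            (Projectivization.mk K ![algebraMap (𝓞 K) K u₁, algebraMap (𝓞 K) K v₁] h1)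
            (Projectivization.mk K ![algebraMap (𝓞 K) K p, algebraMap (𝓞 K) K q] hpq) P := by
        rw [← hrel]
        abel
      rw [heq]
      exact Submodule.sub_mem _ hIH hManin

lemma cusp_mem (hk : 2 ≤ k) {α : K} {d : ℕ} (hd : d ∈ ({1, 2, 3, 7, 11} : Set ℕ))
    (hα2 : α ^ 2 = -(d : K)) (htop : Algebra.adjoin ℚ {α} = ⊤) (β : P1 K) (P : Poly R k) :
    msym K R k Γ β (cInf K) P ∈ Submodule.span R
      {x : MS K R k Γ | ∃ (P : Poly R k) (g : SL(2, 𝓞 K)), x = maninSymM K R k Γ P g.1} := by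
  induction β using Projectivization.ind with
  | h v hv =>
  obtain ⟨a₀, b₀, hb₀, h₀⟩ := IsFractionRing.div_surjective (A := 𝓞 K) (v 0)
  obtain ⟨a₁, b₁, hb₁, h₁⟩ := IsFractionRing.div_surjective (A := 𝓞 K) (v 1)
  have hb₀' : b₀ ≠ 0 := nonZeroDivisors.ne_zero hb₀
  have hb₁' : b₁ ≠ 0 := nonZeroDivisors.ne_zero hb₁
  have hb₀K : algebraMap (𝓞 K) K b₀ ≠ 0 :=
    fun h => hb₀' (RingOfIntegers.coe_injective (by simpa using h))
  have hb₁K : algebraMap (𝓞 K) K b₁ ≠ 0 :=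
    fun h => hb₁' (RingOfIntegers.coe_injective (by simpa using h))
  set p := a₀ * b₁ with hp
  set q := a₁ * b₀ with hq
  have hnand : ¬(p = 0 ∧ q = 0) := by
    rintro ⟨h1, h2⟩
    apply hv
    have ha₀ : a₀ = 0 := by
      rcases mul_eq_zero.mp h1 with h | h
      · exact h
      · exact absurd h hb₁'
    have ha₁ : a₁ = 0 := by
      rcases mul_eq_zero.mp h2 with h | h
      · exact h
      · exact absurd h hb₀'
    have hv0 : v 0 = 0 := by rw [← h₀, ha₀]; simp
    have hv1 : v 1 = 0 := by rw [← h₁, ha₁]; simp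
    funext i
    fin_cases i
    · exact hv0
    · exact hv1
  have hpq : ![algebraMap (𝓞 K) K p, algebraMap (𝓞 K) K q] ≠ 0 := vec_ne_zero K hnand
  have hmk : Projectivization.mk K v hv =
      Projectivization.mk K ![algebraMap (𝓞 K) K p, algebraMap (𝓞 K) K q] hpq := by
    rw [Projectivization.mk_eq_mk_iff']
    refine ⟨1 / (algebraMap (𝓞 K) K b₀ * algebraMap (𝓞 K) K b₁), ?_⟩
    funext i
    fin_cases i
    · simp only [Fin.zero_eta, Fin.mk_one, Fin.isValue, Pi.smul_apply, Matrix.cons_val_zero,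
        Matrix.cons_val_one, Matrix.head_cons, smul_eq_mul]
      rw [hp, _root_.map_mul, ← h₀]
      field_simp
    · simp only [Fin.zero_eta, Fin.mk_one, Fin.isValue, Pi.smul_apply, Matrix.cons_val_zero,
        Matrix.cons_val_one, Matrix.head_cons, smul_eq_mul]
      rw [hq, _root_.map_mul, ← h₁]
      field_simp
  obtain ⟨c, p', q', u, w, hp', hq', hbez⟩ := bezout hd hα2 htop (natN K α d q) p q le_rfl
  have hc0 : c ≠ 0 := by
    intro h
    apply hnand
    rw [hp', hq', h]
    constructor <;> ring
  have hnand' : ¬(p' = 0 ∧ q' = 0) := by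
    rintro ⟨e1, e2⟩
    rw [e1, e2] at hbez
    simp at hbez
  have hpq' : ![algebraMap (𝓞 K) K p', algebraMap (𝓞 K) K q'] ≠ 0 := vec_ne_zero K hnand'
  have hmk2 : Projectivization.mk K ![algebraMap (𝓞 K) K p, algebraMap (𝓞 K) K q] hpq =
      Projectivization.mk K ![algebraMap (𝓞 K) K p', algebraMap (𝓞 K) K q'] hpq' := by
    rw [Projectivization.mk_eq_mk_iff']
    refine ⟨algebraMap (𝓞 K) K c, ?_⟩
    funext i
    fin_cases i
    · simp only [Fin.zero_eta, Fin.mk_one, Fin.isValue, Pi.smul_apply, Matrix.cons_val_zero,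
        Matrix.cons_val_one, Matrix.head_cons, smul_eq_mul]
      rw [← _root_.map_mul, hp']
    · simp only [Fin.zero_eta, Fin.mk_one, Fin.isValue, Pi.smul_apply, Matrix.cons_val_zero,
        Matrix.cons_val_one, Matrix.head_cons, smul_eq_mul]
      rw [← _root_.map_mul, hq']
  rw [hmk, hmk2]
  exact key K R k Γ hk hd hα2 htop (natN K α d q') p' q' u w hbez le_rfl hpq' P

lemma msym_mem (hk : 2 ≤ k) {α : K} {d : ℕ} (hd : d ∈ ({1, 2, 3, 7, 11} : Set ℕ))
    (hα2 : α ^ 2 = -(d : K)) (htop : Algebra.adjoin ℚ {α} = ⊤) (β γ : P1 K) (P : Poly R k) :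
    msym K R k Γ β γ P ∈ Submodule.span R
      {x : MS K R k Γ | ∃ (P : Poly R k) (g : SL(2, 𝓞 K)), x = maninSymM K R k Γ P g.1} := by
  have hrel := msym_rel3 K R k Γ β γ (cInf K) P
  rw [msym_rev K R k Γ β (cInf K) P, add_neg_eq_zero] at hrel
  have heq : msym K R k Γ β γ P
      = msym K R k Γ β (cInf K) P - msym K R k Γ γ (cInf K) P := by
    rw [← hrel]
    abel
  rw [heq]
  exact Submodule.sub_mem _ (cusp_mem K R k Γ hk hd hα2 htop β P)
    (cusp_mem K R k Γ hk hd hα2 htop γ P)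

end Bianchi

end PartIV
namespace Bianchi

/-- The Manin symbols `[P,g]`, `P ∈ R_{k-2}[X,Y]`, `g ∈ SL₂(𝓞)`,
generate the space of modular symbols `M_k(Γ)`; equivalently the natural map
`R_{k-2}[X,Y][Γ\SL₂(𝓞)] → M_k(Γ)`, `P[Γg] ↦ [P,g]`, is surjective. -/
theorem manin_symbols_generate
    (K : Type) [Field K] [NumberField K] (hK : IsEuclideanImagQuad K)
    (R : Type) [CommRing R] [Algebra (𝓞 K) R]
    (k : ℕ) (hk : 2 ≤ k)
    (Γ : Subgroup (SL(2, 𝓞 K))) (hΓ : Γ.FiniteIndex)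
    (hodd : Odd k → ∀ γ : SL(2, 𝓞 K), γ ∈ Γ → γ.1 ≠ -1) :
    Submodule.span R
      {x : MS K R k Γ | ∃ (P : Poly R k) (g : SL(2, 𝓞 K)), x = maninSymM K R k Γ P g.1} = ⊤ := by
  obtain ⟨d, hd, α, hα2, htop⟩ := hK
  refine Submodule.eq_top_iff'.mpr fun x => ?_
  obtain ⟨f, rfl⟩ := Submodule.Quotient.mk_surjective (msRel K R k Γ) x
  induction f using Finsupp.induction with
  | zero => simpa using Submodule.zero_mem _
  | single_add ab P f hab hP ih =>
    rw [Submodule.Quotient.mk_add]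
    exact Submodule.add_mem _ (msym_mem K R k Γ hk hd hα2 htop ab.1 ab.2 P) ih

end Bianchi
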